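/- Let n ≥ 1 and t ≥ 1. The presented group with generators a_1, b_1, …, a_{2t}, b_{2t} and relators c_{2t}, c_t, the words a_k a_{2t+1−k}, b_k a_{2t+1−k} b_{2t+1−k} a_{2t+1−k}^{-1}, a_{2t+1−k} a_k, and b_{2t+1−k} a_{2t+1−k}^{-1} b_k a_{2t+1−k} for each 1 ≤ k ≤ t, together with the relators a_1, a_2, …, a_{t−1}, a_t^n, b_{t+2}, b_{t+3}, …, b_{2t}, is isomorphic to ℤ × ℤ/nℤ. -/

import Mathlib

namespace Paper

/-- The free group `F_g` on the `2g` generators `a_1, b_1, …, a_g, b_g`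
(the pair `(i, false)` is `a_{i+1}`, the pair `(i, true)` is `b_{i+1}`). -/
abbrev F (g : ℕ) := FreeGroup (Fin g × Bool)

/-- The generator `a_i` of `F_g`, for `1 ≤ i ≤ g`; by convention `a_i = 1` for out-of-range
indices (in particular `a_{g+1} = 1`). -/
def a (g i : ℕ) : F g :=
  if h : 1 ≤ i ∧ i ≤ g then FreeGroup.of (⟨i - 1, by omega⟩, false) else 1

/-- The generator `b_i` of `F_g`, for `1 ≤ i ≤ g`. -/
def b (g i : ℕ) : F g :=
  if h : 1 ≤ i ∧ i ≤ g then FreeGroup.of (⟨i - 1, by omega⟩, true) else 1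

/-- The word `c_i = b_i⁻¹ ⋯ b_2⁻¹ b_1⁻¹ (a_1 b_1 a_1⁻¹)(a_2 b_2 a_2⁻¹) ⋯ (a_i b_i a_i⁻¹)`,
with `c_0 = 1`. -/
def c (g i : ℕ) : F g :=
  (((List.range i).reverse.map fun j => (b g (j + 1))⁻¹).prod) *
    (((List.range i).map fun j => a g (j + 1) * b g (j + 1) * (a g (j + 1))⁻¹).prod)

/-- The product `b_i b_{i+1} ⋯ b_j`. -/
def prodb (g i j : ℕ) : F g := ((List.range (j + 1 - i)).map fun l => b g (i + l)).prod

/-- `B^h_{0,1} = b_1 b_2 ⋯ b_h`. -/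
def B01 (g h : ℕ) : F g := prodb g 1 h

/-- `B^h_{0,2} = b_1 b_2 ⋯ b_h · c_h a_{h+1}`. -/
def B02 (g h : ℕ) : F g := prodb g 1 h * c g h * a g (h + 1)

/-- `B^h_{0,s}` for `s = 1, 2`. -/
def B0 (g s h : ℕ) : F g := if s = 1 then B01 g h else B02 g h

/-- `B^h_{2k-1} = a_k · b_k b_{k+1} ⋯ b_{h+1-k} · c_{h+1-k} a_{h+1-k}`. -/
def Bodd (g h k : ℕ) : F g :=
  a g k * prodb g k (h + 1 - k) * c g (h + 1 - k) * a g (h + 1 - k)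

/-- `B^h_{2k} = a_k · b_{k+1} b_{k+2} ⋯ b_{h-k} · c_{h-k} a_{h+1-k}`. -/
def Beven (g h k : ℕ) : F g :=
  a g k * prodb g (k + 1) (h - k) * c g (h - k) * a g (h + 1 - k)

/-- The set of words `ℬ^h_s`: it consists of `B^h_{0,s}, B^h_1, …, B^h_h` (the odd-indexed
`B^h_{2k-1}` for `2k - 1 ≤ h` and the even-indexed `B^h_{2k}` for `2k ≤ h`), together with
`a_{r+1}` and `c_r a_{r+1}` when `h = 2r + 1` is odd. -/
def Bset (g s h : ℕ) : Set (F g) :=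
  {B0 g s h}
    ∪ {w | ∃ k, 1 ≤ k ∧ 2 * k - 1 ≤ h ∧ w = Bodd g h k}
    ∪ {w | ∃ k, 1 ≤ k ∧ 2 * k ≤ h ∧ w = Beven g h k}
    ∪ (if h % 2 = 1 then {a g (h / 2 + 1), c g (h / 2) * a g (h / 2 + 1)} else (∅ : Set (F g)))

/-- The genus-`g` surface group `π_g`, presented with generators `a_1, b_1, …, a_g, b_g`
and the single relator `c_g`. -/
abbrev pi (g : ℕ) := PresentedGroup ({c g g} : Set (F g))

/-- The natural projection `F_g → π_g`. -/
abbrev toPi (g : ℕ) : F g →* pi g := PresentedGroup.mk _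

/-- The quotient of `π_g` by the normal closure of the images of a set `S` of words. -/
abbrev quotBy (g : ℕ) (S : Set (F g)) :=
  pi g ⧸ Subgroup.normalClosure (toPi g '' S)

/-- The projection `π_g → π_g / N(S)`. -/
abbrev projBy (g : ℕ) (S : Set (F g)) : pi g →* quotBy g S :=
  QuotientGroup.mk' _

/-- The relators of Statement 12, in the free group on `a_1, b_1, …, a_{2t}, b_{2t}`:
`c_{2t}`, `c_t`, for each `1 ≤ k ≤ t` the words `a_k a_{2t+1-k}`,
`b_k a_{2t+1-k} b_{2t+1-k} a_{2t+1-k}⁻¹`, `a_{2t+1-k} a_k` and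
`b_{2t+1-k} a_{2t+1-k}⁻¹ b_k a_{2t+1-k}`, together with
`a_1, a_2, …, a_{t-1}`, `a_t^n` and `b_{t+2}, b_{t+3}, …, b_{2t}`. -/
def rels12 (t n : ℕ) : Set (F (2 * t)) :=
  {c (2 * t) (2 * t), c (2 * t) t}
    ∪ {w | ∃ k, 1 ≤ k ∧ k ≤ t ∧
        (w = a (2 * t) k * a (2 * t) (2 * t + 1 - k) ∨
          w = b (2 * t) k * a (2 * t) (2 * t + 1 - k) * b (2 * t) (2 * t + 1 - k) *
                (a (2 * t) (2 * t + 1 - k))⁻¹ ∨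
          w = a (2 * t) (2 * t + 1 - k) * a (2 * t) k ∨
          w = b (2 * t) (2 * t + 1 - k) * (a (2 * t) (2 * t + 1 - k))⁻¹ * b (2 * t) k *
                a (2 * t) (2 * t + 1 - k))}
    ∪ {w | ∃ k, 1 ≤ k ∧ k ≤ t - 1 ∧ w = a (2 * t) k}
    ∪ {a (2 * t) t ^ n}
    ∪ {w | ∃ k, t + 2 ≤ k ∧ k ≤ 2 * t ∧ w = b (2 * t) k}

section Statement12Aux

lemma mk_rel_eq_one {α : Type*} {rels : Set (FreeGroup α)} {r : FreeGroup α} (hr : r ∈ rels) :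
    PresentedGroup.mk rels r = 1 :=
  (QuotientGroup.eq_one_iff r).mpr (Subgroup.subset_normalClosure hr)

lemma lift_c_eq_one {g : ℕ} {M : Type*} [CommGroup M] (φ : Fin g × Bool → M) (i : ℕ) :
    FreeGroup.lift φ (c g i) = 1 := by
  unfold c
  rw [map_mul, map_list_prod, map_list_prod, List.map_map, List.map_map]
  have e1 : ((FreeGroup.lift φ) ∘ fun j => (b g (j + 1))⁻¹)
      = fun j => ((FreeGroup.lift φ) (b g (j + 1)))⁻¹ := by
    funext j; simp
  have e2 : ((FreeGroup.lift φ) ∘ fun j => a g (j + 1) * b g (j + 1) * (a g (j + 1))⁻¹)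
      = fun j => (FreeGroup.lift φ) (b g (j + 1)) := by
    funext j
    simp only [Function.comp_apply, map_mul, map_inv]
    exact mul_inv_cancel_comm _ _
  rw [e1, e2]
  have e3 : ((List.range i).reverse.map fun j => ((FreeGroup.lift φ) (b g (j + 1)))⁻¹).prod
      = (((List.range i).map fun j => (FreeGroup.lift φ) (b g (j + 1))).prod)⁻¹ := by
    rw [List.prod_inv, List.map_map]
    have e4 : ((fun x : M => x⁻¹) ∘ fun j => (FreeGroup.lift φ) (b g (j + 1)))
        = fun j => ((FreeGroup.lift φ) (b g (j + 1)))⁻¹ := rfl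
    rw [e4, List.map_reverse, List.prod_reverse]
  rw [e3, inv_mul_cancel]

lemma map_c_succ {g : ℕ} {H : Type*} [Group H] (φ : F g →* H) (m : ℕ)
    (ha : ∀ j < m, φ (a g (j + 1)) = 1) (hb : ∀ j < m, φ (b g (j + 1)) = 1) :
    φ (c g (m + 1))
      = (φ (b g (m + 1)))⁻¹ * (φ (a g (m + 1)) * φ (b g (m + 1)) * (φ (a g (m + 1)))⁻¹) := by
  unfold c
  rw [map_mul, map_list_prod, map_list_prod, List.map_map, List.map_map, List.range_succ,
    List.reverse_append, List.reverse_singleton, List.map_append, List.map_append,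
    List.prod_append, List.prod_append]
  have h1 : ((List.range m).reverse.map (⇑φ ∘ fun j => (b g (j + 1))⁻¹)).prod = 1 := by
    apply List.prod_eq_one
    intro x hx
    obtain ⟨j, hj, rfl⟩ := List.mem_map.mp hx
    have hj' : j < m := List.mem_range.mp (List.mem_reverse.mp hj)
    simp [hb j hj']
  have h2 : ((List.range m).map (⇑φ ∘ fun j => a g (j + 1) * b g (j + 1) * (a g (j + 1))⁻¹)).prod
      = 1 := by
    apply List.prod_eq_one
    intro x hx
    obtain ⟨j, hj, rfl⟩ := List.mem_map.mp hx
    have hj' : j < m := List.mem_range.mp hj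
    simp [ha j hj', hb j hj', mul_assoc]
  rw [h1, h2]
  simp [mul_assoc]

/-- The map sending the generators of `F (2t)` to `Multiplicative ℤ × Multiplicative (ZMod n)`:
`a_t ↦ (0, 1)`, `a_{t+1} ↦ (0, -1)`, `b_t ↦ (1, 0)`, `b_{t+1} ↦ (-1, 0)`, all others to `1`. -/
def fgen (t n : ℕ) : Fin (2 * t) × Bool → Multiplicative ℤ × Multiplicative (ZMod n) :=
  fun p =>
    if p.1.val + 1 = t then
      (if p.2 then (Multiplicative.ofAdd (1 : ℤ), 1) else (1, Multiplicative.ofAdd (1 : ZMod n)))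
    else if p.1.val = t then
      (if p.2 then (Multiplicative.ofAdd (-1 : ℤ), 1)
        else (1, Multiplicative.ofAdd (-1 : ZMod n)))
    else 1

lemma lift_fgen_a (t n k : ℕ) (ht : 1 ≤ t) :
    FreeGroup.lift (fgen t n) (a (2 * t) k) =
      if k = t then ((1 : Multiplicative ℤ), Multiplicative.ofAdd (1 : ZMod n))
      else if k = t + 1 then (1, Multiplicative.ofAdd (-1 : ZMod n)) else 1 := by
  unfold a
  by_cases hk : 1 ≤ k ∧ k ≤ 2 * t
  · rw [dif_pos hk, FreeGroup.lift_apply_of]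
    show fgen t n (⟨k - 1, by omega⟩, false) = _
    unfold fgen
    simp only [Fin.val_mk, Bool.false_eq_true, if_false]
    rcases eq_or_ne k t with rfl | h1
    · rw [if_pos (by omega), if_pos rfl]
    · rw [if_neg (by omega)]
      rcases eq_or_ne k (t + 1) with rfl | h2
      · rw [if_pos (by omega), if_neg h1, if_pos rfl]
      · rw [if_neg (by omega), if_neg h1, if_neg h2]
  · rw [dif_neg hk, map_one, if_neg (by omega), if_neg (by omega)]

lemma lift_fgen_b (t n k : ℕ) (ht : 1 ≤ t) :
    FreeGroup.lift (fgen t n) (b (2 * t) k) =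
      if k = t then (Multiplicative.ofAdd (1 : ℤ), (1 : Multiplicative (ZMod n)))
      else if k = t + 1 then (Multiplicative.ofAdd (-1 : ℤ), 1) else 1 := by
  unfold b
  by_cases hk : 1 ≤ k ∧ k ≤ 2 * t
  · rw [dif_pos hk, FreeGroup.lift_apply_of]
    show fgen t n (⟨k - 1, by omega⟩, true) = _
    unfold fgen
    simp only [Fin.val_mk, if_true]
    rcases eq_or_ne k t with rfl | h1
    · rw [if_pos (by omega), if_pos rfl]
    · rw [if_neg (by omega)]
      rcases eq_or_ne k (t + 1) with rfl | h2
      · rw [if_pos (by omega), if_neg h1, if_pos rfl]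
      · rw [if_neg (by omega), if_neg h1, if_neg h2]
  · rw [dif_neg hk, map_one, if_neg (by omega), if_neg (by omega)]

lemma fgen_rels (t n : ℕ) (ht : 1 ≤ t) :
    ∀ r ∈ rels12 t n, FreeGroup.lift (fgen t n) r = 1 := by
  intro r hr
  rcases hr with ((((hc | hc) | ⟨k, hk1, hk2, hcase⟩) | ⟨k, hk1, hk2, rfl⟩) | hc) |
    ⟨k, hk1, hk2, rfl⟩
  · rcases hc with rfl
    exact lift_c_eq_one _ _
  · rcases hc with rfl
    exact lift_c_eq_one _ _
  · by_cases hkt : k = t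
    · subst hkt
      have e : 2 * k + 1 - k = k + 1 := by omega
      rcases hcase with rfl | rfl | rfl | rfl <;>
        simp [e, map_mul, map_inv, lift_fgen_a k n _ ht, lift_fgen_b k n _ ht]
    · have e2 : ¬ k = t + 1 := by omega
      have e3 : ¬ 2 * t + 1 - k = t := by omega
      have e4 : ¬ 2 * t + 1 - k = t + 1 := by omega
      rcases hcase with rfl | rfl | rfl | rfl <;>
        simp [map_mul, map_inv, lift_fgen_a t n _ ht, lift_fgen_b t n _ ht, hkt, e2, e3, e4]
  · rw [lift_fgen_a t n _ ht, if_neg (by omega), if_neg (by omega)]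
  · rcases hc with rfl
    rw [map_pow, lift_fgen_a t n _ ht, if_pos rfl]
    refine Prod.ext (by simp) ?_
    show Multiplicative.ofAdd (1 : ZMod n) ^ n = Multiplicative.ofAdd (0 : ZMod n)
    rw [← ofAdd_nsmul]
    simp [nsmul_eq_mul]
  · rw [lift_fgen_b t n _ ht, if_neg (by omega), if_neg (by omega)]

end Statement12Aux

/-- For `n ≥ 1` and `t ≥ 1`, the group presented with generators
`a_1, b_1, …, a_{2t}, b_{2t}` and the relators listed in `rels12` is isomorphic to
`ℤ × ℤ/nℤ`. -/
theorem G3_presentation_iso (n t : ℕ) (hn : 1 ≤ n) (ht : 1 ≤ t) :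
    Nonempty (PresentedGroup (rels12 t n) ≃*
      Multiplicative ℤ × Multiplicative (ZMod n)) := by
  classical
  haveI : NeZero n := ⟨by omega⟩
  set G := PresentedGroup (rels12 t n) with hG
  let π : F (2 * t) →* G := PresentedGroup.mk _
  have hπ : ∀ r ∈ rels12 t n, π r = 1 := fun r hr => mk_rel_eq_one hr
  -- the defining relations
  have hAa : ∀ k, 1 ≤ k → k ≤ t →
      π (a (2 * t) k) * π (a (2 * t) (2 * t + 1 - k)) = 1 := by
    intro k h1 h2
    rw [← map_mul]
    exact hπ _ (Or.inl (Or.inl (Or.inl (Or.inr ⟨k, h1, h2, Or.inl rfl⟩))))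
  have hBa : ∀ k, 1 ≤ k → k ≤ t →
      π (b (2 * t) k) * π (a (2 * t) (2 * t + 1 - k)) * π (b (2 * t) (2 * t + 1 - k)) *
        (π (a (2 * t) (2 * t + 1 - k)))⁻¹ = 1 := by
    intro k h1 h2
    rw [← map_inv, ← map_mul, ← map_mul, ← map_mul]
    exact hπ _ (Or.inl (Or.inl (Or.inl (Or.inr ⟨k, h1, h2, Or.inr (Or.inl rfl)⟩))))
  have hAsmall : ∀ k, 1 ≤ k → k ≤ t - 1 → π (a (2 * t) k) = 1 := by
    intro k h1 h2
    exact hπ _ (Or.inl (Or.inl (Or.inr ⟨k, h1, h2, rfl⟩)))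
  have hAn : π (a (2 * t) t) ^ n = 1 := by
    rw [← map_pow]
    exact hπ _ (Or.inl (Or.inr rfl))
  have hBbig : ∀ k, t + 2 ≤ k → k ≤ 2 * t → π (b (2 * t) k) = 1 := by
    intro k h1 h2
    exact hπ _ (Or.inr ⟨k, h1, h2, rfl⟩)
  have hct : π (c (2 * t) t) = 1 := hπ _ (Or.inl (Or.inl (Or.inl (Or.inl (Or.inr rfl)))))
  -- derived facts
  have hAbig : ∀ k, t + 2 ≤ k → k ≤ 2 * t → π (a (2 * t) k) = 1 := by
    intro k h1 h2
    have h3 := hAa (2 * t + 1 - k) (by omega) (by omega)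
    rw [show 2 * t + 1 - (2 * t + 1 - k) = k by omega,
      hAsmall (2 * t + 1 - k) (by omega) (by omega), one_mul] at h3
    exact h3
  have hAt1 : π (a (2 * t) (t + 1)) = (π (a (2 * t) t))⁻¹ := by
    have h3 := hAa t ht le_rfl
    rw [show 2 * t + 1 - t = t + 1 by omega] at h3
    exact (inv_eq_of_mul_eq_one_right h3).symm
  have hBsmall : ∀ k, 1 ≤ k → k ≤ t - 1 → π (b (2 * t) k) = 1 := by
    intro k h1 h2
    have h3 := hBa k h1 (by omega)
    rw [hAbig (2 * t + 1 - k) (by omega) (by omega),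
      hBbig (2 * t + 1 - k) (by omega) (by omega)] at h3
    simpa using h3
  set At := π (a (2 * t) t) with hAt
  set Bt := π (b (2 * t) t) with hBt
  have hBt1 : π (b (2 * t) (t + 1)) = At * Bt⁻¹ * At⁻¹ := by
    have h3 := hBa t ht le_rfl
    rw [show 2 * t + 1 - t = t + 1 by omega, hAt1] at h3
    have h4 := congrArg (fun z => At * Bt⁻¹ * z * At⁻¹) h3
    calc _ = At * Bt⁻¹ * (Bt * At⁻¹ * π (b (2 * t) (t + 1)) * At⁻¹⁻¹) * At⁻¹ := by group
      _ = At * Bt⁻¹ * 1 * At⁻¹ := h4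
      _ = _ := by rw [mul_one]
  have hcomm : At * Bt = Bt * At := by
    have h5 := map_c_succ π (t - 1)
      (fun j hj => hAsmall (j + 1) (by omega) (by omega))
      (fun j hj => hBsmall (j + 1) (by omega) (by omega))
    rw [show t - 1 + 1 = t by omega] at h5
    have h6 : Bt⁻¹ * (At * Bt * At⁻¹) = 1 := by rw [← h5]; exact hct
    have h7 : At * Bt * At⁻¹ = Bt := (inv_mul_eq_one.mp h6).symm
    have h8 := congrArg (fun z => z * At) h7
    simpa [mul_assoc] using h8
  -- the homomorphism to `ℤ × ZMod n`
  let fG : G →* Multiplicative ℤ × Multiplicative (ZMod n) :=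
    PresentedGroup.toGroup (fgen_rels t n ht)
  have fG_of : ∀ x : Fin (2 * t) × Bool, fG (PresentedGroup.of x) = fgen t n x :=
    fun x => PresentedGroup.toGroup.of (fgen_rels t n ht)
  -- the homomorphism back
  have hAnz : (zmultiplesHom (Additive G) (Additive.ofMul At)) ((n : ℤ)) = 0 := by
    show ((n : ℤ)) • Additive.ofMul At = 0
    rw [← ofMul_zpow, zpow_natCast, hAn]
    rfl
  let zadd : ZMod n →+ Additive G :=
    ZMod.lift n ⟨zmultiplesHom (Additive G) (Additive.ofMul At), hAnz⟩
  let zhom : Multiplicative (ZMod n) →* G := AddMonoidHom.toMultiplicativeLeft zadd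
  have zhom_coe : ∀ m : ℤ, zhom (Multiplicative.ofAdd ((m : ZMod n))) = At ^ m := by
    intro m
    show Additive.toMul (zadd ((m : ZMod n))) = At ^ m
    have h9 : zadd ((m : ZMod n)) = m • Additive.ofMul At :=
      ZMod.lift_coe n ⟨zmultiplesHom (Additive G) (Additive.ofMul At), hAnz⟩ m
    rw [h9, ← ofMul_zpow]
    rfl
  have commBA : ∀ (z : Multiplicative ℤ) (w : Multiplicative (ZMod n)),
      Commute ((zpowersHom G Bt) z) (zhom w) := by
    intro z w
    obtain ⟨m, hm⟩ := ZMod.intCast_surjective (Multiplicative.toAdd w)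
    have hw : w = Multiplicative.ofAdd ((m : ZMod n)) := by rw [hm, ofAdd_toAdd]
    rw [hw, zhom_coe, zpowersHom_apply]
    exact (show Commute Bt At from hcomm.symm).zpow_zpow _ _
  let gM : Multiplicative ℤ × Multiplicative (ZMod n) →* G :=
    (zpowersHom G Bt).noncommCoprod zhom commBA
  have gM_apply : ∀ (z : Multiplicative ℤ) (w : Multiplicative (ZMod n)),
      gM (z, w) = Bt ^ Multiplicative.toAdd z * zhom w := fun z w => rfl
  -- generators in terms of `of`
  have of_a : ∀ k (h1 : 1 ≤ k) (h2 : k ≤ 2 * t),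
      π (a (2 * t) k) = PresentedGroup.of (⟨k - 1, by omega⟩, false) := by
    intro k h1 h2
    rw [a, dif_pos ⟨h1, h2⟩]
    rfl
  have of_b : ∀ k (h1 : 1 ≤ k) (h2 : k ≤ 2 * t),
      π (b (2 * t) k) = PresentedGroup.of (⟨k - 1, by omega⟩, true) := by
    intro k h1 h2
    rw [b, dif_pos ⟨h1, h2⟩]
    rfl
  have of_a' : ∀ i : Fin (2 * t), PresentedGroup.of (i, false) = π (a (2 * t) (i.val + 1)) := by
    intro i
    have hi := i.isLt
    rw [of_a (i.val + 1) (by omega) (by omega)]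
    have : (⟨i.val + 1 - 1, by omega⟩ : Fin (2 * t)) = i := Fin.ext (by simp)
    rw [this]
  have of_b' : ∀ i : Fin (2 * t), PresentedGroup.of (i, true) = π (b (2 * t) (i.val + 1)) := by
    intro i
    have hi := i.isLt
    rw [of_b (i.val + 1) (by omega) (by omega)]
    have : (⟨i.val + 1 - 1, by omega⟩ : Fin (2 * t)) = i := Fin.ext (by simp)
    rw [this]
  -- values of gM at the four basic elements
  have gB1 : gM (Multiplicative.ofAdd (1 : ℤ), 1) = Bt := by
    rw [gM_apply]
    simp
  have gBm1 : gM (Multiplicative.ofAdd (-1 : ℤ), 1) = Bt⁻¹ := by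
    rw [gM_apply]
    simp
  have gA1 : gM ((1 : Multiplicative ℤ), Multiplicative.ofAdd (1 : ZMod n)) = At := by
    rw [gM_apply]
    have h10 := zhom_coe 1
    rw [Int.cast_one] at h10
    rw [h10]
    simp
  have gAm1 : gM ((1 : Multiplicative ℤ), Multiplicative.ofAdd (-1 : ZMod n)) = At⁻¹ := by
    rw [gM_apply]
    have h10 := zhom_coe (-1)
    rw [Int.cast_neg, Int.cast_one] at h10
    rw [h10]
    simp
  -- first composition identity
  have h₁ : gM.comp fG = MonoidHom.id G := by
    apply PresentedGroup.ext
    rintro ⟨i, bb⟩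
    have hi := i.isLt
    rw [MonoidHom.comp_apply, MonoidHom.id_apply, fG_of]
    cases bb
    · rw [of_a' i]
      unfold fgen
      by_cases h1 : i.val + 1 = t
      · rw [if_pos h1, if_neg Bool.false_ne_true, gA1, h1]
      · by_cases h2 : i.val = t
        · rw [if_neg h1, if_pos h2, if_neg Bool.false_ne_true, gAm1,
            show i.val + 1 = t + 1 by omega]
          exact hAt1.symm
        · rw [if_neg h1, if_neg h2, map_one]
          rcases lt_or_ge (i.val + 1) t with hlt | hge
          · exact (hAsmall _ (by omega) (by omega)).symm
          · exact (hAbig _ (by omega) (by omega)).symm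
    · rw [of_b' i]
      unfold fgen
      by_cases h1 : i.val + 1 = t
      · rw [if_pos h1, if_pos rfl, gB1, h1]
      · by_cases h2 : i.val = t
        · rw [if_neg h1, if_pos h2, if_pos rfl, gBm1,
            show i.val + 1 = t + 1 by omega, hBt1]
          have hc : Commute At Bt⁻¹ := (show Commute At Bt from hcomm).inv_right
          rw [hc.eq, mul_assoc, mul_inv_cancel, mul_one]
        · rw [if_neg h1, if_neg h2, map_one]
          rcases lt_or_ge (i.val + 1) t with hlt | hge
          · exact (hBsmall _ (by omega) (by omega)).symm
          · exact (hBbig _ (by omega) (by omega)).symm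
  -- second composition identity
  have h₂ : fG.comp gM = MonoidHom.id (Multiplicative ℤ × Multiplicative (ZMod n)) := by
    apply MonoidHom.ext
    rintro ⟨z, w⟩
    obtain ⟨m, hm⟩ := ZMod.intCast_surjective (Multiplicative.toAdd w)
    have hw : w = Multiplicative.ofAdd ((m : ZMod n)) := by rw [hm, ofAdd_toAdd]
    subst hw
    rw [MonoidHom.comp_apply, MonoidHom.id_apply, gM_apply, zhom_coe, map_mul, map_zpow,
      map_zpow]
    have fB : fG Bt = (Multiplicative.ofAdd (1 : ℤ), (1 : Multiplicative (ZMod n))) := by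
      rw [hBt, of_b t ht (by omega), fG_of]
      unfold fgen
      rw [if_pos (show t - 1 + 1 = t by omega)]
      rfl
    have fA : fG At = ((1 : Multiplicative ℤ), Multiplicative.ofAdd (1 : ZMod n)) := by
      rw [hAt, of_a t ht (by omega), fG_of]
      unfold fgen
      rw [if_pos (show t - 1 + 1 = t by omega)]
      rfl
    rw [fB, fA]
    refine Prod.ext ?_ ?_
    · show (Multiplicative.ofAdd (1 : ℤ)) ^ Multiplicative.toAdd z *
        (1 : Multiplicative ℤ) ^ m = z
      rw [one_zpow, mul_one, ← ofAdd_zsmul]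
      simp
    · show ((1 : Multiplicative (ZMod n))) ^ Multiplicative.toAdd z *
        (Multiplicative.ofAdd (1 : ZMod n)) ^ m = Multiplicative.ofAdd ((m : ZMod n))
      rw [one_zpow, one_mul, ← ofAdd_zsmul]
      simp [zsmul_eq_mul]
  exact ⟨MonoidHom.toMulEquiv fG gM h₁ h₂⟩
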